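/- If e > n/k − 1 (equivalently ke + k > n), then the orbit sum [a_1⋯a_k b_1^e⋯b_k^e] is decomposable in L_n = (Λ_{F_2}(a_1,...,a_n) ⊗ F_2[b_1,...,b_n])^{Σ_n}, i.e., it lies in the square of the augmentation ideal. -/

import Mathlib

open MvPolynomial

/-- The ideal generated by the squares of the `a`-variables (indexed by `Sum.inl`); the
quotient is `K_n = Λ_{F₂}(a_1,…,a_n) ⊗ F₂[b_1,…,b_n]` (char 2), with the `b`-variables
indexed by `Sum.inr`. -/
noncomputable def sqIdealK (n : ℕ) : Ideal (MvPolynomial (Fin n ⊕ Fin n) (ZMod 2)) :=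
  Ideal.span (Set.range fun i : Fin n =>
    (X (Sum.inl i) : MvPolynomial (Fin n ⊕ Fin n) (ZMod 2)) ^ 2)

/-- `K_n = Λ_{F₂}(a_1,…,a_n) ⊗ F₂[b_1,…,b_n]`. -/
noncomputable abbrev Kn (n : ℕ) : Type :=
  MvPolynomial (Fin n ⊕ Fin n) (ZMod 2) ⧸ sqIdealK n

/-- The action of `g ∈ Σ_n` on `K_n`, permuting the `a`'s and `b`'s simultaneously. -/
noncomputable def permActK (n : ℕ) (g : Equiv.Perm (Fin n)) : Kn n →ₐ[ZMod 2] Kn n :=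
  Ideal.Quotient.liftₐ (sqIdealK n)
    ((Ideal.Quotient.mkₐ (ZMod 2) (sqIdealK n)).comp
      (rename (Sum.map g g) : _ →ₐ[ZMod 2] _))
    (by
      intro a ha
      refine Submodule.span_induction ?_ ?_ ?_ ?_ ha
      · rintro _ ⟨i, rfl⟩
        rw [AlgHom.comp_apply, map_pow, rename_X, Ideal.Quotient.mkₐ_eq_mk,
          Ideal.Quotient.eq_zero_iff_mem]
        exact Ideal.subset_span ⟨g i, rfl⟩
      · exact map_zero _
      · intro x y _ _ hx hy; rw [map_add, hx, hy, add_zero]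
      · intro c x _ hx; rw [smul_eq_mul, map_mul, hx, mul_zero])

/-- `L_n = K_n^{Σ_n}`, the subalgebra of invariants. -/
noncomputable def Ln (n : ℕ) : Subalgebra (ZMod 2) (Kn n) where
  carrier := {x | ∀ g : Equiv.Perm (Fin n), permActK n g x = x}
  add_mem' := fun hx hy => by intro g; rw [map_add, hx g, hy g]
  mul_mem' := fun hx hy => by intro g; rw [map_mul, hx g, hy g]
  algebraMap_mem' := fun r g => (permActK n g).commutes r

/-- The orbit sum `[m]` of a monomial (given by its exponent vector `μ`): the sum over the
`Σ_n`-orbit of `m`, each distinct monomial appearing exactly once. -/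
noncomputable def orbitSum (n : ℕ) (μ : (Fin n ⊕ Fin n) →₀ ℕ) : Kn n :=
  Ideal.Quotient.mk (sqIdealK n)
    (∑ ν ∈ Finset.image
        (fun g : Equiv.Perm (Fin n) => Finsupp.equivMapDomain (Equiv.sumCongr g g) μ)
        Finset.univ,
      monomial ν (1 : ZMod 2))

/-- The augmentation `K_n → F₂` sending all variables to zero. -/
noncomputable def augK (n : ℕ) : Kn n →ₐ[ZMod 2] ZMod 2 :=
  Ideal.Quotient.liftₐ (sqIdealK n) (aeval 0)
    (by
      intro a ha
      refine Submodule.span_induction ?_ ?_ ?_ ?_ ha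
      · rintro _ ⟨i, rfl⟩
        simp
      · exact map_zero _
      · intro x y _ _ hx hy; rw [map_add, hx, hy, add_zero]
      · intro c x _ hx; rw [smul_eq_mul, map_mul, hx, mul_zero])

/-- The augmentation ideal `I ⊆ L_n`. -/
noncomputable def augIdealL (n : ℕ) : Ideal (Ln n) :=
  RingHom.ker (((augK n).comp (Ln n).val : Ln n →ₐ[ZMod 2] ZMod 2) : Ln n →+* ZMod 2)

/-- The exponent vector of the monomial `a_1⋯a_k b_1^e⋯b_k^e`. -/
noncomputable def headMonomial (n k e : ℕ) : (Fin n ⊕ Fin n) →₀ ℕ :=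
  Finsupp.equivFunOnFinite.symm (Sum.elim
    (fun i : Fin n => if (i : ℕ) < k then 1 else 0)
    (fun i : Fin n => if (i : ℕ) < k then e else 0))

set_option synthInstance.maxHeartbeats 1000000
set_option maxHeartbeats 2000000
namespace Stmt15Aux
open Finset MvPolynomial

/-- Role encoding: `0` = absent, `1` = pure `b`, `d+2` = `a·b^d`. -/
noncomputable def factor (n : ℕ) (i : Fin n) : ℕ → MvPolynomial (Fin n ⊕ Fin n) (ZMod 2)
  | 0 => 1
  | 1 => X (Sum.inr i)
  | (d+2) => X (Sum.inl i) * X (Sum.inr i) ^ d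

noncomputable def mono (n : ℕ) (ρ : Fin n → ℕ) : MvPolynomial (Fin n ⊕ Fin n) (ZMod 2) :=
  ∏ i, factor n i (ρ i)

noncomputable def cnt (n : ℕ) (v : ℕ) (ρ : Fin n → ℕ) : ℕ :=
  (Finset.univ.filter fun i => ρ i = v).card

def IsSpec (n : ℕ) (c : ℕ →₀ ℕ) (c₀ : ℕ) (ρ : Fin n → ℕ) : Prop :=
  (∀ d, cnt n (d+2) ρ = c d) ∧ cnt n 1 ρ = c₀

lemma cnt_ne_zero_of {n : ℕ} {ρ : Fin n → ℕ} {i : Fin n} {v : ℕ} (hr : ρ i = v) :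
    cnt n v ρ ≠ 0 := by
  have hi : i ∈ Finset.univ.filter fun j => ρ j = v := by simp [hr]
  unfold cnt
  intro h0
  rw [Finset.card_eq_zero] at h0
  simp [h0] at hi

open Classical in
noncomputable def specSet (n : ℕ) (c : ℕ →₀ ℕ) (c₀ : ℕ) : Finset (Fin n → ℕ) :=
  (Fintype.piFinset fun _ => Finset.range (c.support.sup id + 3)).filter (IsSpec n c c₀)

lemma mem_specSet {n : ℕ} {c : ℕ →₀ ℕ} {c₀ : ℕ} {ρ : Fin n → ℕ} :
    ρ ∈ specSet n c c₀ ↔ IsSpec n c c₀ ρ := by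
  classical
  constructor
  · intro h
    exact (Finset.mem_filter.mp h).2
  · intro h
    refine Finset.mem_filter.mpr ⟨Fintype.mem_piFinset.mpr fun i => ?_, h⟩
    rw [Finset.mem_range]
    rcases hr : ρ i with _ | (_ | d)
    · omega
    · omega
    · have h1 : c d ≠ 0 := by rw [← h.1 d]; exact cnt_ne_zero_of hr
      have h2 : d ∈ c.support := Finsupp.mem_support_iff.mpr h1
      have h3 := Finset.le_sup (f := id) h2
      simp only [id] at h3
      omega

/-- Roles occurring in a spec-set element. -/
lemma roles_of_spec {n : ℕ} {c : ℕ →₀ ℕ} {c₀ : ℕ} {ρ : Fin n → ℕ}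
    (h : IsSpec n c c₀ ρ) (i : Fin n) :
    ρ i = 0 ∨ ρ i = 1 ∨ (2 ≤ ρ i ∧ c (ρ i - 2) ≠ 0) := by
  rcases hr : ρ i with _ | (_ | d)
  · exact Or.inl rfl
  · exact Or.inr (Or.inl rfl)
  · refine Or.inr (Or.inr ⟨by omega, ?_⟩)
    have : cnt n (d+2) ρ ≠ 0 := cnt_ne_zero_of hr
    rw [h.1 d] at this
    simpa using this

end Stmt15Aux

namespace Stmt15Aux
open Finset MvPolynomial

lemma permActK_mk (n : ℕ) (g : Equiv.Perm (Fin n)) (p : MvPolynomial (Fin n ⊕ Fin n) (ZMod 2)) :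
    permActK n g (Ideal.Quotient.mk (sqIdealK n) p) =
      Ideal.Quotient.mk (sqIdealK n) (rename (Sum.map ⇑g ⇑g) p) := by
  rw [permActK, Ideal.Quotient.liftₐ_apply]
  rfl

lemma augK_mk (n : ℕ) (p : MvPolynomial (Fin n ⊕ Fin n) (ZMod 2)) :
    augK n (Ideal.Quotient.mk (sqIdealK n) p) = aeval 0 p := by
  rw [augK, Ideal.Quotient.liftₐ_apply]
  rfl

lemma rename_factor (n : ℕ) (g : Equiv.Perm (Fin n)) (i : Fin n) (r : ℕ) :
    rename (Sum.map ⇑g ⇑g) (factor n i r) = factor n (g i) r := by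
  rcases r with _ | (_ | d) <;> simp [factor]

lemma rename_mono (n : ℕ) (g : Equiv.Perm (Fin n)) (ρ : Fin n → ℕ) :
    rename (Sum.map ⇑g ⇑g) (mono n ρ) = mono n (ρ ∘ ⇑g.symm) := by
  rw [mono, map_prod]
  have h1 : ∀ i : Fin n, rename (Sum.map ⇑g ⇑g) (factor n i (ρ i)) =
      factor n (g i) ((ρ ∘ ⇑g.symm) (g i)) := by
    intro i
    rw [rename_factor]
    simp
  rw [Finset.prod_congr rfl fun i _ => h1 i]
  exact Equiv.prod_comp g (fun j => factor n j ((ρ ∘ ⇑g.symm) j))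

lemma cnt_comp (n : ℕ) (v : ℕ) (ρ : Fin n → ℕ) (π : Equiv.Perm (Fin n)) :
    cnt n v (ρ ∘ ⇑π) = cnt n v ρ := by
  unfold cnt
  apply Finset.card_bij (fun i _ => π i)
  · intro a ha
    simp only [mem_filter, mem_univ, true_and, Function.comp] at ha ⊢
    exact ha
  · intro a _ b _ hab
    exact π.injective hab
  · intro b hb
    refine ⟨π.symm b, ?_, by simp⟩
    simp only [mem_filter, mem_univ, true_and, Function.comp] at hb ⊢
    simpa using hb

lemma isSpec_comp {n : ℕ} {c : ℕ →₀ ℕ} {c₀ : ℕ} {ρ : Fin n → ℕ} (π : Equiv.Perm (Fin n))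
    (h : IsSpec n c c₀ ρ) : IsSpec n c c₀ (ρ ∘ ⇑π) :=
  ⟨fun d => (cnt_comp n (d+2) ρ π).trans (h.1 d), (cnt_comp n 1 ρ π).trans h.2⟩

noncomputable def OS (n : ℕ) (c : ℕ →₀ ℕ) (c₀ : ℕ) : Kn n :=
  Ideal.Quotient.mk (sqIdealK n) (∑ ρ ∈ specSet n c c₀, mono n ρ)

lemma OS_invariant (n : ℕ) (c : ℕ →₀ ℕ) (c₀ : ℕ) (g : Equiv.Perm (Fin n)) :
    permActK n g (OS n c c₀) = OS n c c₀ := by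
  rw [OS, permActK_mk, map_sum]
  congr 1
  rw [Finset.sum_congr rfl fun ρ _ => rename_mono n g ρ]
  apply Finset.sum_bij' (fun ρ _ => ρ ∘ ⇑g.symm) (fun ρ _ => ρ ∘ ⇑g)
  · intro ρ hρ
    exact mem_specSet.mpr (isSpec_comp g.symm (mem_specSet.mp hρ))
  · intro ρ hρ
    exact mem_specSet.mpr (isSpec_comp g (mem_specSet.mp hρ))
  · intro ρ _
    funext i; simp
  · intro ρ _
    funext i; simp
  · intro ρ _
    rfl

noncomputable def OSL (n : ℕ) (c : ℕ →₀ ℕ) (c₀ : ℕ) : Ln n :=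
  ⟨OS n c c₀, fun g => OS_invariant n c c₀ g⟩

lemma exists_of_cnt_ne_zero {n v : ℕ} {ρ : Fin n → ℕ} (h : cnt n v ρ ≠ 0) :
    ∃ i, ρ i = v := by
  unfold cnt at h
  have h2 : (Finset.univ.filter fun i => ρ i = v).Nonempty := by
    rw [← Finset.card_pos]; omega
  obtain ⟨i, hi⟩ := h2
  exact ⟨i, (Finset.mem_filter.mp hi).2⟩

lemma aeval_zero_factor {n : ℕ} (i : Fin n) {r : ℕ} (hr : r ≠ 0) :
    aeval (0 : Fin n ⊕ Fin n → ZMod 2) (factor n i r) = 0 := by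
  rcases r with _ | (_ | d)
  · omega
  · simp [factor]
  · simp [factor]

lemma augK_OS (n : ℕ) (c : ℕ →₀ ℕ) (c₀ : ℕ) (h : c ≠ 0 ∨ c₀ ≠ 0) :
    augK n (OS n c c₀) = 0 := by
  rw [OS, augK_mk, map_sum]
  apply Finset.sum_eq_zero
  intro ρ hρ
  have hspec := mem_specSet.mp hρ
  have hex : ∃ i, ρ i ≠ 0 := by
    rcases h with h | h
    · obtain ⟨d, hd⟩ := Finsupp.ne_iff.mp h
      simp only [Finsupp.coe_zero, Pi.zero_apply] at hd
      obtain ⟨i, hi⟩ := exists_of_cnt_ne_zero (ρ := ρ) (v := d + 2) (by rw [hspec.1 d]; exact hd)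
      exact ⟨i, by omega⟩
    · obtain ⟨i, hi⟩ := exists_of_cnt_ne_zero (ρ := ρ) (v := 1) (by rw [hspec.2]; exact h)
      exact ⟨i, by omega⟩
  obtain ⟨i, hi⟩ := hex
  rw [mono, map_prod]
  exact Finset.prod_eq_zero (Finset.mem_univ i) (aeval_zero_factor i hi)

lemma OSL_mem_aug (n : ℕ) (c : ℕ →₀ ℕ) (c₀ : ℕ) (h : c ≠ 0 ∨ c₀ ≠ 0) :
    OSL n c c₀ ∈ augIdealL n := by
  rw [augIdealL, RingHom.mem_ker]
  exact augK_OS n c c₀ h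

lemma OS_eq_zero (n : ℕ) (d m c₀ : ℕ) (h : n < m + c₀) :
    OS n (Finsupp.single d m) c₀ = 0 := by
  have hempty : specSet n (Finsupp.single d m) c₀ = ∅ := by
    rw [Finset.eq_empty_iff_forall_notMem]
    intro ρ hρ
    have hs := mem_specSet.mp hρ
    have h1 : cnt n (d+2) ρ = m := by rw [hs.1 d]; simp
    have h2 : cnt n 1 ρ = c₀ := hs.2
    have hdisj : Disjoint (Finset.univ.filter fun i => ρ i = d + 2)
        (Finset.univ.filter fun i => ρ i = 1) := by
      rw [Finset.disjoint_filter]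
      intro i _ hi1 hi2
      omega
    have := Finset.card_union_of_disjoint hdisj
    have hle := Finset.card_le_univ ((Finset.univ.filter fun i => ρ i = d + 2) ∪
      (Finset.univ.filter fun i => ρ i = 1))
    rw [this] at hle
    unfold cnt at h1 h2
    simp only [Finset.card_univ, Fintype.card_fin] at hle
    omega
  rw [OS, hempty]
  simp

end Stmt15Aux

namespace Stmt15Aux
open Finset MvPolynomial

lemma cnt_congr {n v : ℕ} {ρ : Fin n → ℕ} (P : Fin n → Prop) [DecidablePred P]
    (h : ∀ i, ρ i = v ↔ P i) : cnt n v ρ = #(univ.filter P) := by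
  unfold cnt
  congr 1
  ext i
  simp [h i]

section Workhorse

variable {n d₁ c₁ c₀ : ℕ} {c : ℕ →₀ ℕ}

/-- split an element of the merged spec back into its two factors -/
def split1 (d₁ : ℕ) {n : ℕ} (σ : Fin n → ℕ) : Fin n → ℕ :=
  fun i => if σ i = d₁+2 ∨ σ i = d₁+3 then d₁+2 else 0

def split2 (d₁ : ℕ) {n : ℕ} (σ : Fin n → ℕ) : Fin n → ℕ :=
  fun i => if σ i = d₁+3 then 1 else if σ i = d₁+2 then 0 else σ i

lemma c_eval_high (hc : ∀ d ∈ c.support, d < d₁) {d : ℕ} (hd : d₁ ≤ d) : c d = 0 := by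
  by_contra h
  exact absurd (hc d (Finsupp.mem_support_iff.mpr h)) (by omega)

lemma roles1 {ρ₁ : Fin n → ℕ} (h1 : IsSpec n (Finsupp.single d₁ c₁) 0 ρ₁) (i : Fin n) :
    ρ₁ i = 0 ∨ ρ₁ i = d₁ + 2 := by
  rcases roles_of_spec h1 i with h | h | ⟨h2, h3⟩
  · exact Or.inl h
  · exact absurd h1.2 (cnt_ne_zero_of h)
  · rw [Finsupp.single_apply] at h3
    split at h3
    · omega
    · omega

lemma roles2 {ρ₂ : Fin n → ℕ} (hc : ∀ d ∈ c.support, d < d₁) (h2 : IsSpec n c c₀ ρ₂)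
    (i : Fin n) : ρ₂ i ≤ 1 ∨ (2 ≤ ρ₂ i ∧ ρ₂ i < d₁ + 2) := by
  rcases roles_of_spec h2 i with h | h | ⟨ha, hb⟩
  · omega
  · omega
  · have := hc _ (Finsupp.mem_support_iff.mpr hb)
    omega

/-- the target spec values -/
lemma c'_apply (hc : ∀ d ∈ c.support, d < d₁) (t m d : ℕ) :
    (c + Finsupp.single (d₁+1) t + Finsupp.single d₁ m) d =
      if d = d₁ + 1 then t else if d = d₁ then m else c d := by
  have h0 : c d₁ = 0 := c_eval_high hc le_rfl
  have h1 : c (d₁+1) = 0 := c_eval_high hc (by omega)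
  simp only [Finsupp.add_apply, Finsupp.single_apply]
  split_ifs <;> (try subst_vars) <;> omega

variable {ρ₁ ρ₂ : Fin n → ℕ}

lemma merge_key (h1 : IsSpec n (Finsupp.single d₁ c₁) 0 ρ₁)
    (hc : ∀ d ∈ c.support, d < d₁) (h2 : IsSpec n c c₀ ρ₂)
    (hg : ∀ i, 2 ≤ ρ₁ i → ρ₂ i ≤ 1) (i : Fin n) :
    ((ρ₁ + ρ₂) i = d₁+3 ↔ (ρ₁ i = d₁+2 ∧ ρ₂ i = 1)) ∧
    ((ρ₁ + ρ₂) i = d₁+2 ↔ (ρ₁ i = d₁+2 ∧ ρ₂ i = 0)) ∧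
    ((ρ₁ + ρ₂) i = 1 ↔ (ρ₁ i = 0 ∧ ρ₂ i = 1)) ∧
    (∀ d, d ≠ d₁ → d ≠ d₁ + 1 → ((ρ₁ + ρ₂) i = d+2 ↔ ρ₂ i = d+2)) := by
  have r1 := roles1 h1 i
  have r2 := roles2 hc h2 i
  have hp : (ρ₁ + ρ₂) i = ρ₁ i + ρ₂ i := rfl
  rcases r1 with h | h
  · refine ⟨by omega, by omega, by omega, fun d hd hd' => by omega⟩
  · have hgl := hg i (by omega)
    refine ⟨by omega, by omega, by omega, fun d hd hd' => by omega⟩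

lemma merge_spec (h1 : IsSpec n (Finsupp.single d₁ c₁) 0 ρ₁)
    (hc : ∀ d ∈ c.support, d < d₁) (h2 : IsSpec n c c₀ ρ₂)
    (hg : ∀ i, 2 ≤ ρ₁ i → ρ₂ i ≤ 1) :
    cnt n (d₁+3) (ρ₁ + ρ₂) ≤ min c₁ c₀ ∧
    IsSpec n (c + Finsupp.single (d₁+1) (cnt n (d₁+3) (ρ₁+ρ₂))
        + Finsupp.single d₁ (c₁ - cnt n (d₁+3) (ρ₁+ρ₂))) (c₀ - cnt n (d₁+3) (ρ₁+ρ₂)) (ρ₁+ρ₂) := by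
  classical
  have key := merge_key h1 hc h2 hg
  have hA : cnt n (d₁+3) (ρ₁+ρ₂) = #(univ.filter fun i => ρ₁ i = d₁+2 ∧ ρ₂ i = 1) :=
    cnt_congr _ fun i => (key i).1
  have hB : cnt n (d₁+2) (ρ₁+ρ₂) = #(univ.filter fun i => ρ₁ i = d₁+2 ∧ ρ₂ i = 0) :=
    cnt_congr _ fun i => (key i).2.1
  have hC : cnt n 1 (ρ₁+ρ₂) = #(univ.filter fun i => ρ₁ i = 0 ∧ ρ₂ i = 1) :=
    cnt_congr _ fun i => (key i).2.2.1
  have hD : ∀ d, d ≠ d₁ → d ≠ d₁ + 1 → cnt n (d+2) (ρ₁+ρ₂) = cnt n (d+2) ρ₂ := by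
    intro d hd hd'
    rw [cnt_congr (P := fun i => ρ₂ i = d+2) fun i => (key i).2.2.2 d hd hd']
    rfl
  have hsplit1 : #(univ.filter fun i => ρ₁ i = d₁+2 ∧ ρ₂ i = 0) +
      #(univ.filter fun i => ρ₁ i = d₁+2 ∧ ρ₂ i = 1) = c₁ := by
    have keyc := Finset.card_filter_add_card_filter_not
      (s := univ.filter fun i => ρ₁ i = d₁+2) (p := fun i => ρ₂ i = 0)
    rw [Finset.filter_filter, Finset.filter_filter] at keyc
    have e1 : (univ.filter fun i => ρ₁ i = d₁+2 ∧ ¬ ρ₂ i = 0) =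
        (univ.filter fun i => ρ₁ i = d₁+2 ∧ ρ₂ i = 1) := by
      ext i
      simp only [mem_filter, mem_univ, true_and]
      have hgl := fun (h : 2 ≤ ρ₁ i) => hg i h
      constructor <;> intro hx
      · have := hgl (by omega); exact ⟨hx.1, by omega⟩
      · exact ⟨hx.1, by omega⟩
    rw [e1] at keyc
    have hcc : cnt n (d₁+2) ρ₁ = c₁ := by rw [h1.1 d₁]; simp
    unfold cnt at hcc
    omega
  have hsplit2 : #(univ.filter fun i => ρ₁ i = 0 ∧ ρ₂ i = 1) +
      #(univ.filter fun i => ρ₁ i = d₁+2 ∧ ρ₂ i = 1) = c₀ := by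
    have keyc := Finset.card_filter_add_card_filter_not
      (s := univ.filter fun i => ρ₂ i = 1) (p := fun i => ρ₁ i = 0)
    rw [Finset.filter_filter, Finset.filter_filter] at keyc
    have e1 : (univ.filter fun i => ρ₂ i = 1 ∧ ρ₁ i = 0) =
        (univ.filter fun i => ρ₁ i = 0 ∧ ρ₂ i = 1) := by
      ext i; simp only [mem_filter, mem_univ, true_and]; tauto
    have e2 : (univ.filter fun i => ρ₂ i = 1 ∧ ¬ ρ₁ i = 0) =
        (univ.filter fun i => ρ₁ i = d₁+2 ∧ ρ₂ i = 1) := by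
      ext i
      simp only [mem_filter, mem_univ, true_and]
      have r1 := roles1 h1 i
      constructor <;> intro hx <;> exact ⟨by omega, by omega⟩
    rw [e1, e2] at keyc
    have h2' := h2.2
    unfold cnt at h2'
    omega
  refine ⟨by omega, ⟨?_, ?_⟩⟩
  · intro d
    rw [c'_apply hc]
    by_cases hd : d = d₁ + 1
    · rw [if_pos hd, hd]
    · rw [if_neg hd]
      by_cases hd' : d = d₁
      · rw [if_pos hd', hd', hB]
        omega
      · rw [if_neg hd', hD d hd' hd]
        exact h2.1 d
  · rw [hC]
    have h2' := h2.2
    omega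

lemma split_merge (h1 : IsSpec n (Finsupp.single d₁ c₁) 0 ρ₁)
    (hc : ∀ d ∈ c.support, d < d₁) (h2 : IsSpec n c c₀ ρ₂)
    (hg : ∀ i, 2 ≤ ρ₁ i → ρ₂ i ≤ 1) :
    split1 d₁ (ρ₁ + ρ₂) = ρ₁ ∧ split2 d₁ (ρ₁ + ρ₂) = ρ₂ := by
  have hh : ∀ i, split1 d₁ (ρ₁ + ρ₂) i = ρ₁ i ∧ split2 d₁ (ρ₁ + ρ₂) i = ρ₂ i := by
    intro i
    have r1 := roles1 h1 i
    have r2 := roles2 hc h2 i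
    have hp : (ρ₁ + ρ₂) i = ρ₁ i + ρ₂ i := rfl
    simp only [split1, split2]
    rcases r1 with h | h
    · split_ifs <;> omega
    · have hgl := hg i (by omega)
      split_ifs <;> omega
  exact ⟨funext fun i => (hh i).1, funext fun i => (hh i).2⟩

lemma split_spec {t : ℕ} (hc : ∀ d ∈ c.support, d < d₁) (ht : t ≤ min c₁ c₀)
    {σ : Fin n → ℕ}
    (hσ : IsSpec n (c + Finsupp.single (d₁+1) t + Finsupp.single d₁ (c₁ - t)) (c₀ - t) σ) :
    IsSpec n (Finsupp.single d₁ c₁) 0 (split1 d₁ σ) ∧ IsSpec n c c₀ (split2 d₁ σ) ∧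
      (∀ i, 2 ≤ split1 d₁ σ i → split2 d₁ σ i ≤ 1) ∧ split1 d₁ σ + split2 d₁ σ = σ ∧
      cnt n (d₁+3) σ = t := by
  classical
  have hct : cnt n (d₁+3) σ = t := by
    have h := hσ.1 (d₁ + 1)
    rw [c'_apply hc, if_pos rfl] at h
    have e : d₁ + 1 + 2 = d₁ + 3 := by omega
    rw [e] at h
    exact h
  have hc2 : cnt n (d₁+2) σ = c₁ - t := by
    have h := hσ.1 d₁
    rw [c'_apply hc, if_neg (by omega), if_pos rfl] at h
    exact h
  refine ⟨⟨?_, ?_⟩, ⟨?_, ?_⟩, ?_, ?_, hct⟩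
  · -- split1 cls counts
    intro d
    by_cases hd : d = d₁
    · rw [hd]
      have e0 : (Finsupp.single d₁ c₁) d₁ = c₁ := by simp
      rw [e0]
      rw [cnt_congr (P := fun i => σ i = d₁+2 ∨ σ i = d₁+3)
        (fun i => by simp only [split1]; split_ifs <;> constructor <;> intro hx <;> first | exact hx.elim | omega)]
      rw [Finset.filter_or, Finset.card_union_of_disjoint (by
        rw [Finset.disjoint_filter]; intro i _ ha hb; omega)]
      unfold cnt at hct hc2
      omega
    · have e0 : (Finsupp.single d₁ c₁) d = 0 := by
        rw [Finsupp.single_apply, if_neg (by omega)]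
      rw [e0]
      rw [cnt_congr (P := fun _ => False)
        (fun i => by simp only [split1]; split_ifs <;> constructor <;> intro hx <;> first | exact hx.elim | omega)]
      simp
  · -- split1 pure count = 0
    rw [cnt_congr (P := fun _ => False)
      (fun i => by simp only [split1]; split_ifs <;> constructor <;> intro hx <;> first | exact hx.elim | omega)]
    simp
  · -- split2 cls counts
    intro d
    by_cases hd : d = d₁
    · rw [hd, c_eval_high hc le_rfl, cnt_congr (P := fun _ => False)
        (fun i => by simp only [split2]; split_ifs <;> constructor <;> intro hx <;> first | exact hx.elim | omega)]
      simp
    · by_cases hd' : d = d₁ + 1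
      · rw [hd', c_eval_high hc (by omega), cnt_congr (P := fun _ => False)
          (fun i => by simp only [split2]; split_ifs <;> constructor <;> intro hx <;> first | exact hx.elim | omega)]
        simp
      · have h := hσ.1 d
        rw [c'_apply hc, if_neg (by omega), if_neg (by omega)] at h
        rw [← h]
        exact cnt_congr (P := fun i => σ i = d + 2)
          (fun i => by simp only [split2]; split_ifs <;> constructor <;> intro hx <;> first | exact hx.elim | omega)
  · -- split2 pure count
    rw [cnt_congr (P := fun i => σ i = d₁ + 3 ∨ σ i = 1)
      (fun i => by simp only [split2]; split_ifs <;> constructor <;> intro hx <;> first | exact hx.elim | omega)]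
    rw [Finset.filter_or, Finset.card_union_of_disjoint (by
      rw [Finset.disjoint_filter]; intro i _ ha hb; omega)]
    have h2' := hσ.2
    unfold cnt at hct h2'
    omega
  · -- goodness
    intro i
    simp only [split1, split2]
    split_ifs <;> omega
  · -- merge back
    funext i
    simp only [split1, split2, Pi.add_apply]
    split_ifs <;> omega

end Workhorse
end Stmt15Aux

namespace Stmt15Aux
open Finset MvPolynomial

lemma factor_mul_good (n : ℕ) (i : Fin n) {r s : ℕ}
    (h : r = 0 ∨ s = 0 ∨ (2 ≤ r ∧ s = 1)) :
    factor n i r * factor n i s = factor n i (r + s) := by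
  rcases h with h | h | ⟨h1, h2⟩
  · subst h; simp [factor]
  · subst h; simp [factor]
  · obtain ⟨d, rfl⟩ : ∃ d, r = d + 2 := ⟨r - 2, by omega⟩
    subst h2
    show (X (Sum.inl i) * X (Sum.inr i) ^ d) * X (Sum.inr i) =
      X (Sum.inl i) * X (Sum.inr i) ^ (d + 1)
    ring

lemma mono_mul_good {n d₁ c₁ : ℕ} {ρ₁ ρ₂ : Fin n → ℕ}
    (h1 : IsSpec n (Finsupp.single d₁ c₁) 0 ρ₁)
    (hg : ∀ i, 2 ≤ ρ₁ i → ρ₂ i ≤ 1) :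
    mono n ρ₁ * mono n ρ₂ = mono n (ρ₁ + ρ₂) := by
  rw [mono, mono, mono, ← Finset.prod_mul_distrib]
  apply Finset.prod_congr rfl
  intro i _
  have : (ρ₁ + ρ₂) i = ρ₁ i + ρ₂ i := rfl
  rw [this]
  apply factor_mul_good
  rcases roles1 h1 i with h | h
  · exact Or.inl h
  · by_cases h2 : ρ₂ i = 0
    · exact Or.inr (Or.inl h2)
    · have := hg i (by omega)
      exact Or.inr (Or.inr ⟨by omega, by omega⟩)

lemma mono_mul_bad {n : ℕ} {ρ₁ ρ₂ : Fin n → ℕ} (i : Fin n)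
    (h1 : 2 ≤ ρ₁ i) (h2 : 2 ≤ ρ₂ i) :
    Ideal.Quotient.mk (sqIdealK n) (mono n ρ₁ * mono n ρ₂) = 0 := by
  rw [Ideal.Quotient.eq_zero_iff_mem, mono, mono, ← Finset.prod_mul_distrib]
  rw [← Finset.mul_prod_erase _ _ (Finset.mem_univ i)]
  obtain ⟨p, hp⟩ : ∃ p, ρ₁ i = p + 2 := ⟨ρ₁ i - 2, by omega⟩
  obtain ⟨q, hq⟩ : ∃ q, ρ₂ i = q + 2 := ⟨ρ₂ i - 2, by omega⟩
  rw [hp, hq]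
  have e : factor n i (p+2) * factor n i (q+2) =
      X (Sum.inl i)^2 * (X (Sum.inr i))^(p+q) := by
    show (X (Sum.inl i) * X (Sum.inr i) ^ p) * (X (Sum.inl i) * X (Sum.inr i) ^ q) = _
    ring
  rw [e, mul_assoc]
  exact Ideal.mul_mem_right _ _ (Ideal.subset_span ⟨i, rfl⟩)

theorem workhorse (n d₁ c₁ c₀ : ℕ) (c : ℕ →₀ ℕ) (hc : ∀ d ∈ c.support, d < d₁) :
    OS n (Finsupp.single d₁ c₁) 0 * OS n c c₀ =
      ∑ t ∈ Finset.range (min c₁ c₀ + 1),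
        OS n (c + Finsupp.single (d₁+1) t + Finsupp.single d₁ (c₁ - t)) (c₀ - t) := by
  classical
  simp only [OS]
  rw [← map_mul, Finset.sum_mul_sum, map_sum]
  simp only [map_sum]
  rw [← Finset.sum_product' (s := specSet n (Finsupp.single d₁ c₁) 0) (t := specSet n c c₀)
    (f := fun ρ₁ ρ₂ => Ideal.Quotient.mk (sqIdealK n) (mono n ρ₁ * mono n ρ₂))]
  rw [Finset.sum_sigma' (Finset.range (min c₁ c₀ + 1))
    (fun t => specSet n (c + Finsupp.single (d₁+1) t + Finsupp.single d₁ (c₁ - t)) (c₀ - t))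
    (fun _ σ => Ideal.Quotient.mk (sqIdealK n) (mono n σ))]
  rw [← Finset.sum_filter_add_sum_filter_not
    (specSet n (Finsupp.single d₁ c₁) 0 ×ˢ specSet n c c₀)
    (fun p => ∀ i, 2 ≤ p.1 i → p.2 i ≤ 1)]
  have hbad : ∑ p ∈ (specSet n (Finsupp.single d₁ c₁) 0 ×ˢ specSet n c c₀).filter
      (fun p => ¬ ∀ i, 2 ≤ p.1 i → p.2 i ≤ 1),
      Ideal.Quotient.mk (sqIdealK n) (mono n p.1 * mono n p.2) = 0 := by
    apply Finset.sum_eq_zero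
    intro p hp
    have hng := (Finset.mem_filter.mp hp).2
    push_neg at hng
    obtain ⟨i, hi1, hi2⟩ := hng
    exact mono_mul_bad i hi1 (by omega)
  rw [hbad, add_zero]
  apply Finset.sum_bij'
    (i := fun p _ => (⟨cnt n (d₁+3) (p.1 + p.2), p.1 + p.2⟩ : Σ _ : ℕ, (Fin n → ℕ)))
    (j := fun q _ => (split1 d₁ q.2, split2 d₁ q.2))
  · -- hi : maps into sigma set
    intro p hp
    rw [Finset.mem_filter, Finset.mem_product, mem_specSet, mem_specSet] at hp
    obtain ⟨⟨hs1, hs2⟩, hg⟩ := hp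
    obtain ⟨hle, hspec⟩ := merge_spec hs1 hc hs2 hg
    rw [Finset.mem_sigma, Finset.mem_range]
    constructor
    · show cnt n (d₁+3) (p.1 + p.2) < min c₁ c₀ + 1
      omega
    · exact mem_specSet.mpr hspec
  · -- hj
    rintro ⟨t, σ⟩ hq
    rw [Finset.mem_sigma, Finset.mem_range] at hq
    obtain ⟨ht, hσ⟩ := hq
    obtain ⟨hs1, hs2, hg, _, _⟩ := split_spec hc (by omega) (mem_specSet.mp hσ)
    rw [Finset.mem_filter, Finset.mem_product, mem_specSet, mem_specSet]
    exact ⟨⟨hs1, hs2⟩, hg⟩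
  · -- left inverse
    intro p hp
    rw [Finset.mem_filter, Finset.mem_product, mem_specSet, mem_specSet] at hp
    obtain ⟨⟨hs1, hs2⟩, hg⟩ := hp
    obtain ⟨e1, e2⟩ := split_merge hs1 hc hs2 hg
    simp only [e1, e2]
  · -- right inverse
    rintro ⟨t, σ⟩ hq
    rw [Finset.mem_sigma, Finset.mem_range] at hq
    obtain ⟨ht, hσ⟩ := hq
    obtain ⟨_, _, _, hmerge, hcnt⟩ := split_spec hc (by omega) (mem_specSet.mp hσ)
    simp only [hmerge, hcnt]
  · -- values
    intro p hp
    rw [Finset.mem_filter, Finset.mem_product, mem_specSet, mem_specSet] at hp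
    obtain ⟨⟨hs1, hs2⟩, hg⟩ := hp
    rw [mono_mul_good hs1 hg]

end Stmt15Aux

namespace Stmt15Aux
open Finset MvPolynomial

lemma workhorseL (n d₁ c₁ c₀ : ℕ) (c : ℕ →₀ ℕ) (hc : ∀ d ∈ c.support, d < d₁) :
    OSL n (Finsupp.single d₁ c₁) 0 * OSL n c c₀ =
      ∑ t ∈ Finset.range (min c₁ c₀ + 1),
        OSL n (c + Finsupp.single (d₁+1) t + Finsupp.single d₁ (c₁ - t)) (c₀ - t) := by
  apply Subtype.ext
  push_cast [MulMemClass.coe_mul, AddSubmonoidClass.coe_finset_sum]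
  exact workhorse n d₁ c₁ c₀ c hc

lemma char2Ln (n : ℕ) (x : Ln n) : x + x = 0 := by
  have h1 : ((2:ℕ) : Ln n) = 0 := by
    rw [← map_natCast (algebraMap (ZMod 2) (Ln n)) 2]
    have h2 : ((2:ℕ) : ZMod 2) = 0 := by decide
    rw [h2, map_zero]
  calc x + x = (2:ℕ) • x := (two_nsmul x).symm
  _ = ((2:ℕ) : Ln n) * x := by rw [nsmul_eq_mul]
  _ = 0 := by rw [h1, zero_mul]

lemma lemA (n : ℕ) : ∀ c₀ : ℕ, ∀ c : ℕ →₀ ℕ, 2 ≤ c.support.card →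
    OSL n c c₀ ∈ (augIdealL n) ^ 2 := by
  intro c₀
  induction c₀ using Nat.strong_induction_on with
  | _ c₀ IH =>
    intro c hcard
    have hne : c.support.Nonempty := by rw [← Finset.card_pos]; omega
    set d₁ := c.support.max' hne with hd₁
    have hmem : d₁ ∈ c.support := c.support.max'_mem hne
    have hcd₁ : c d₁ ≠ 0 := Finsupp.mem_support_iff.mp hmem
    have hcsupp : ∀ d ∈ (Finsupp.erase d₁ c).support, d < d₁ := by
      intro d hd
      rw [Finsupp.support_erase, Finset.mem_erase] at hd
      exact lt_of_le_of_ne (Finset.le_max' _ d hd.2) hd.1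
    have hwh := workhorseL n d₁ (c d₁) c₀ (Finsupp.erase d₁ c) hcsupp
    rw [Finset.sum_range_succ'] at hwh
    have hf0 : Finsupp.erase d₁ c + Finsupp.single (d₁+1) 0 + Finsupp.single d₁ (c d₁ - 0) = c := by
      rw [Finsupp.single_zero, add_zero, Nat.sub_zero, add_comm]
      exact Finsupp.single_add_erase d₁ c
    rw [hf0, Nat.sub_zero] at hwh
    have hOSc : OSL n c c₀ = OSL n (Finsupp.single d₁ (c d₁)) 0 * OSL n (Finsupp.erase d₁ c) c₀
        - ∑ t ∈ Finset.range (min (c d₁) c₀), OSL n (Finsupp.erase d₁ c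
            + Finsupp.single (d₁+1) (t+1) + Finsupp.single d₁ (c d₁ - (t+1))) (c₀ - (t+1)) := by
      linear_combination -hwh
    rw [hOSc]
    apply sub_mem
    · rw [pow_two]
      apply Ideal.mul_mem_mul
      · exact OSL_mem_aug n _ _ (Or.inl (mt Finsupp.single_eq_zero.mp hcd₁))
      · exact OSL_mem_aug n _ _ (Or.inl (Finsupp.support_nonempty_iff.mp (by
          rw [Finsupp.support_erase]
          rw [← Finset.card_pos, Finset.card_erase_of_mem hmem]
          omega)))
    · apply Submodule.sum_mem
      intro t ht
      rw [Finset.mem_range] at ht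
      have hlt : c₀ - (t+1) < c₀ := by omega
      apply IH _ hlt
      -- support has ≥ 2 elements : some d₀ ∈ erase-support and d₁+1
      have hne' : (Finsupp.erase d₁ c).support.Nonempty := by
        rw [Finsupp.support_erase, ← Finset.card_pos, Finset.card_erase_of_mem hmem]
        omega
      obtain ⟨d₀, hd₀⟩ := hne'
      have hd₀lt : d₀ < d₁ := hcsupp d₀ hd₀
      have hv₀ : (Finsupp.erase d₁ c + Finsupp.single (d₁+1) (t+1)
          + Finsupp.single d₁ (c d₁ - (t+1))) d₀ ≠ 0 := by
        rw [c'_apply hcsupp, if_neg (by omega), if_neg (by omega)]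
        rw [Finsupp.support_erase, Finset.mem_erase] at hd₀
        rw [Finsupp.erase_ne hd₀.1]
        exact Finsupp.mem_support_iff.mp hd₀.2
      have hv₁ : (Finsupp.erase d₁ c + Finsupp.single (d₁+1) (t+1)
          + Finsupp.single d₁ (c d₁ - (t+1))) (d₁+1) ≠ 0 := by
        rw [c'_apply hcsupp, if_pos rfl]
        omega
      exact Finset.one_lt_card.mpr ⟨d₀, Finsupp.mem_support_iff.mpr hv₀, d₁+1,
        Finsupp.mem_support_iff.mpr hv₁, by omega⟩

lemma OSL_zero (n : ℕ) {d m c₀ : ℕ} (h : n < m + c₀) : OSL n (Finsupp.single d m) c₀ = 0 :=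
  Subtype.ext (OS_eq_zero n d m c₀ h)

lemma chain (n k e : ℕ) (hk : 1 ≤ k) :
    ∀ j, j ≤ e → OSL n (Finsupp.single e k) 0 - OSL n (Finsupp.single (e - j) k) (j * k)
      ∈ (augIdealL n) ^ 2 := by
  intro j
  induction j with
  | zero =>
    intro _
    rw [Nat.sub_zero, Nat.zero_mul, sub_self]
    exact zero_mem _
  | succ j IHj =>
    intro hje
    have IH := IHj (by omega)
    have hwh := workhorseL n (e - (j+1)) k ((j+1)*k) 0 (by simp)
    have hmin : min k ((j+1)*k) = k := Nat.min_eq_left (by nlinarith)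
    rw [hmin, Finset.sum_range_succ] at hwh
    have e1 : (0 : ℕ →₀ ℕ) + Finsupp.single (e - (j+1) + 1) k + Finsupp.single (e - (j+1)) (k - k)
        = Finsupp.single (e - j) k := by
      have e2 : e - (j+1) + 1 = e - j := by omega
      rw [e2, Nat.sub_self, Finsupp.single_zero, zero_add, add_zero]
    have e3 : (j+1)*k - k = j*k := by
      rw [Nat.succ_mul]
      omega
    rw [e1, e3] at hwh
    -- split off the t = 0 term of the remaining sum
    rw [← Finset.add_sum_erase _ _ (Finset.mem_range.mpr (by omega : 0 < k))] at hwh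
    have e4 : (0 : ℕ →₀ ℕ) + Finsupp.single (e - (j+1) + 1) 0 + Finsupp.single (e - (j+1)) (k - 0)
        = Finsupp.single (e - (j+1)) k := by
      rw [Finsupp.single_zero, Nat.sub_zero, zero_add, zero_add]
    rw [e4, Nat.sub_zero] at hwh
    -- hwh : x * v = (W(j+1) + Smid) + Wj
    have hz := char2Ln n (OSL n (Finsupp.single (e - (j+1)) k) ((j+1)*k))
    have key2 : OSL n (Finsupp.single (e - j) k) (j*k)
        - OSL n (Finsupp.single (e - (j+1)) k) ((j+1)*k)
        = OSL n (Finsupp.single (e - (j+1)) k) 0 * OSL n 0 ((j+1)*k)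
          - ∑ t ∈ (Finset.range k).erase 0,
            OSL n ((0 : ℕ →₀ ℕ) + Finsupp.single (e - (j+1) + 1) t
              + Finsupp.single (e - (j+1)) (k - t)) ((j+1)*k - t) := by
      linear_combination - hwh - hz
    have hstep : OSL n (Finsupp.single (e - j) k) (j*k)
        - OSL n (Finsupp.single (e - (j+1)) k) ((j+1)*k) ∈ (augIdealL n)^2 := by
      rw [key2]
      apply sub_mem
      · rw [pow_two]
        apply Ideal.mul_mem_mul
        · exact OSL_mem_aug n _ _ (Or.inl (mt Finsupp.single_eq_zero.mp (by omega)))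
        · exact OSL_mem_aug n _ _ (Or.inr (by positivity))
      · apply Submodule.sum_mem
        intro t ht
        rw [Finset.mem_erase, Finset.mem_range] at ht
        apply lemA
        have hz0 : ∀ d ∈ (0 : ℕ →₀ ℕ).support, d < e - (j+1) := by simp
        have hv₀ : ((0 : ℕ →₀ ℕ) + Finsupp.single (e - (j+1) + 1) t
            + Finsupp.single (e - (j+1)) (k - t)) (e - (j+1) + 1) ≠ 0 := by
          rw [c'_apply hz0, if_pos rfl]
          exact ht.1
        have hv₁ : ((0 : ℕ →₀ ℕ) + Finsupp.single (e - (j+1) + 1) t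
            + Finsupp.single (e - (j+1)) (k - t)) (e - (j+1)) ≠ 0 := by
          rw [c'_apply hz0, if_neg (by omega), if_pos rfl]
          omega
        exact Finset.one_lt_card.mpr ⟨_, Finsupp.mem_support_iff.mpr hv₀, _,
          Finsupp.mem_support_iff.mpr hv₁, by omega⟩
    have := add_mem IH hstep
    rwa [sub_add_sub_cancel] at this

end Stmt15Aux

namespace Stmt15Aux
open Finset MvPolynomial

def aexp : ℕ → ℕ | 0 => 0 | 1 => 0 | (_+2) => 1
def bexp : ℕ → ℕ | 0 => 0 | 1 => 1 | (d+2) => d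

lemma role_recover (r : ℕ) : (if aexp r = 1 then bexp r + 2 else bexp r) = r := by
  rcases r with _|(_|d) <;> simp [aexp, bexp]

noncomputable def vec (n : ℕ) (ρ : Fin n → ℕ) : (Fin n ⊕ Fin n) →₀ ℕ :=
  ∑ i, (Finsupp.single (Sum.inl i) (aexp (ρ i)) + Finsupp.single (Sum.inr i) (bexp (ρ i)))

lemma vec_apply_inl (n : ℕ) (ρ : Fin n → ℕ) (i : Fin n) :
    vec n ρ (Sum.inl i) = aexp (ρ i) := by
  rw [vec, Finsupp.finset_sum_apply]
  simp [Finsupp.single_apply]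

lemma vec_apply_inr (n : ℕ) (ρ : Fin n → ℕ) (i : Fin n) :
    vec n ρ (Sum.inr i) = bexp (ρ i) := by
  rw [vec, Finsupp.finset_sum_apply]
  simp [Finsupp.single_apply]

lemma vec_inj {n : ℕ} : Function.Injective (vec n) := by
  intro ρ ρ' h
  funext i
  have ha : aexp (ρ i) = aexp (ρ' i) := by
    rw [← vec_apply_inl, h, vec_apply_inl]
  have hb : bexp (ρ i) = bexp (ρ' i) := by
    rw [← vec_apply_inr, h, vec_apply_inr]
  rw [← role_recover (ρ i), ← role_recover (ρ' i), ha, hb]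

lemma prod_monomial {n : ℕ} {ι : Type*} (s : Finset ι) (w : ι → ((Fin n ⊕ Fin n) →₀ ℕ)) :
    (∏ i ∈ s, (monomial (w i) (1 : ZMod 2))) = monomial (∑ i ∈ s, w i) 1 := by
  classical
  induction s using Finset.cons_induction with
  | empty => simp [MvPolynomial.monomial_zero']
  | cons a s ha ih => rw [Finset.prod_cons, Finset.sum_cons, ih, monomial_mul, one_mul]

lemma factor_eq (n : ℕ) (i : Fin n) (r : ℕ) : factor n i r =
    monomial (Finsupp.single (Sum.inl i) (aexp r) + Finsupp.single (Sum.inr i) (bexp r))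
      (1 : ZMod 2) := by
  rcases r with _|(_|d)
  · simp [factor, aexp, bexp, MvPolynomial.monomial_zero']
  · simp only [factor, aexp, bexp, Finsupp.single_zero, zero_add]
    rw [← X_pow_eq_monomial, pow_one]
  · simp only [factor, aexp, bexp]
    rw [show (Finsupp.single (Sum.inl i) 1 + Finsupp.single (Sum.inr i) d) =
      (Finsupp.single (Sum.inl i) 1 + Finsupp.single (Sum.inr i) d) from rfl]
    rw [← one_mul (1 : ZMod 2), ← monomial_mul, ← X_pow_eq_monomial, ← X_pow_eq_monomial,
      pow_one]

lemma mono_eq (n : ℕ) (ρ : Fin n → ℕ) :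
    mono n ρ = monomial (vec n ρ) (1 : ZMod 2) := by
  rw [mono, vec]
  rw [Finset.prod_congr rfl fun i _ => factor_eq n i (ρ i)]
  exact prod_monomial _ _

lemma mapdomain_head (n k e : ℕ) (g : Equiv.Perm (Fin n)) :
    Finsupp.equivMapDomain (Equiv.sumCongr g g) (headMonomial n k e) =
      vec n (fun i => if ((g.symm i : Fin n) : ℕ) < k then e + 2 else 0) := by
  ext x
  rw [Finsupp.equivMapDomain_apply]
  cases x with
  | inl i =>
    rw [vec_apply_inl]
    simp only [Equiv.sumCongr_symm, Equiv.sumCongr_apply, Sum.map_inl, headMonomial,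
      Finsupp.coe_equivFunOnFinite_symm, Sum.elim_inl]
    split_ifs <;> simp [aexp]
  | inr i =>
    rw [vec_apply_inr]
    simp only [Equiv.sumCongr_symm, Equiv.sumCongr_apply, Sum.map_inr, headMonomial,
      Finsupp.coe_equivFunOnFinite_symm, Sum.elim_inr]
    split_ifs <;> simp [bexp]

lemma ite_eq_iff_false (c : Prop) [Decidable c] (x y v : ℕ) (hx : x ≠ v) (hy : y ≠ v) :
    ((if c then x else y) = v) ↔ False := by
  split_ifs <;> simp [hx, hy]

lemma ite_eq_iff_cond (c : Prop) [Decidable c] (x y v : ℕ) (hx : x = v) (hy : y ≠ v) :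
    ((if c then x else y) = v) ↔ c := by
  split_ifs with h <;> simp_all

lemma card_filter_lt (n k : ℕ) (hkn : k ≤ n) :
    #(univ.filter fun i : Fin n => (i:ℕ) < k) = k := by
  have hcb : #(univ.filter fun i : Fin n => (i:ℕ) < k) = #(Finset.range k) := by
    refine Finset.card_bij' (fun (a : Fin n) _ => (a : ℕ))
      (fun b hb => (⟨b, lt_of_lt_of_le (Finset.mem_range.mp hb) hkn⟩ : Fin n)) ?_ ?_ ?_ ?_
    · intro a ha
      rw [Finset.mem_range]
      exact (Finset.mem_filter.mp ha).2
    · intro b hb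
      rw [Finset.mem_filter]
      exact ⟨Finset.mem_univ _, Finset.mem_range.mp hb⟩
    · intro a _
      rfl
    · intro b _
      rfl
  rw [hcb, Finset.card_range]

lemma rho_g_spec (n k e : ℕ) (hkn : k ≤ n) (g : Equiv.Perm (Fin n)) :
    IsSpec n (Finsupp.single e k) 0 (fun i => if ((g.symm i : Fin n) : ℕ) < k then e + 2 else 0) := by
  classical
  constructor
  · intro d
    by_cases hd : d = e
    · subst hd
      rw [Finsupp.single_eq_same]
      rw [cnt_congr (P := fun i => ((g.symm i : Fin n) : ℕ) < k)
        (fun i => ite_eq_iff_cond _ _ _ _ rfl (by omega))]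
      have hcb : #(univ.filter fun i => ((g.symm i : Fin n) : ℕ) < k) =
          #(univ.filter fun i : Fin n => (i:ℕ) < k) := by
        refine Finset.card_bij' (fun a _ => g.symm a) (fun b _ => g b) ?_ ?_ ?_ ?_
        · intro a ha
          rw [Finset.mem_filter] at ha ⊢
          exact ⟨Finset.mem_univ _, ha.2⟩
        · intro b hb
          rw [Finset.mem_filter] at hb ⊢
          refine ⟨Finset.mem_univ _, ?_⟩
          rw [Equiv.symm_apply_apply]
          exact hb.2
        · intro a _
          simp
        · intro b _
          simp
      rw [hcb, card_filter_lt n k hkn]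
    · rw [Finsupp.single_apply, if_neg (by omega)]
      rw [cnt_congr (P := fun _ => False) (fun i => ite_eq_iff_false _ _ _ _ (by omega) (by omega))]
      simp
  · rw [cnt_congr (P := fun _ => False) (fun i => ite_eq_iff_false _ _ _ _ (by omega) (by omega))]
    simp

lemma exists_perm (n k : ℕ) (hkn : k ≤ n) (S : Finset (Fin n)) (hS : S.card = k) :
    ∃ g : Equiv.Perm (Fin n), ∀ i, (((g.symm i : Fin n) : ℕ) < k ↔ i ∈ S) := by
  classical
  set S₀ : Finset (Fin n) := univ.filter (fun i => (i:ℕ) < k) with hS₀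
  have hc0 : S₀.card = k := card_filter_lt n k hkn
  have hceq : S₀.card = S.card := by rw [hc0, hS]
  have hcompl : S₀ᶜ.card = Sᶜ.card := by
    rw [Finset.card_compl, Finset.card_compl, hc0, hS]
  let e₁ : {x // x ∈ S₀} ≃ {x // x ∈ S} := Finset.equivOfCardEq hceq
  let eC : {x // x ∈ S₀ᶜ} ≃ {x // x ∈ Sᶜ} := Finset.equivOfCardEq hcompl
  let e₂ : {x // ¬ x ∈ S₀} ≃ {x // ¬ x ∈ S} :=
    ((Equiv.subtypeEquivRight (fun x => (Finset.mem_compl (s := S₀) (a := x)))).symm.trans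
      eC).trans (Equiv.subtypeEquivRight (fun x => Finset.mem_compl))
  refine ⟨Equiv.subtypeCongr e₁ e₂, ?_⟩
  have hkey : ∀ a : Fin n, (a ∈ S₀ ↔ (Equiv.subtypeCongr e₁ e₂) a ∈ S) := by
    intro a
    by_cases ha : a ∈ S₀
    · have hga : (Equiv.subtypeCongr e₁ e₂) a = ↑(e₁ ⟨a, ha⟩) := by
        simp [Equiv.subtypeCongr, Equiv.sumCompl_symm_apply_of_pos ha]
      rw [hga]
      exact ⟨fun _ => (e₁ ⟨a, ha⟩).2, fun _ => ha⟩
    · have hga : (Equiv.subtypeCongr e₁ e₂) a = ↑(e₂ ⟨a, ha⟩) := by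
        simp [Equiv.subtypeCongr, Equiv.sumCompl_symm_apply_of_neg ha]
      rw [hga]
      exact ⟨fun h => absurd h ha, fun h => absurd h (e₂ ⟨a, ha⟩).2⟩
  intro i
  have hk2 := hkey ((Equiv.subtypeCongr e₁ e₂).symm i)
  rw [Equiv.apply_symm_apply] at hk2
  rw [← hk2]
  simp [hS₀]

lemma orbit_eq (n k e : ℕ) (hkn : k ≤ n) :
    orbitSum n (headMonomial n k e) = OS n (Finsupp.single e k) 0 := by
  classical
  rw [orbitSum, OS]
  congr 1
  have himg : Finset.image (fun g : Equiv.Perm (Fin n) =>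
      Finsupp.equivMapDomain (Equiv.sumCongr g g) (headMonomial n k e)) Finset.univ =
      Finset.image (vec n) (specSet n (Finsupp.single e k) 0) := by
    ext ν
    simp only [Finset.mem_image, Finset.mem_univ, true_and]
    constructor
    · rintro ⟨g, rfl⟩
      exact ⟨_, mem_specSet.mpr (rho_g_spec n k e hkn g), (mapdomain_head n k e g).symm⟩
    · rintro ⟨ρ, hρ, rfl⟩
      have hspec := mem_specSet.mp hρ
      have hcard : #(univ.filter fun i => ρ i = e + 2) = k := by
        have hc := hspec.1 e
        rw [Finsupp.single_eq_same] at hc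
        exact hc
      obtain ⟨g, hg⟩ := exists_perm n k hkn _ hcard
      refine ⟨g, ?_⟩
      rw [mapdomain_head n k e g]
      congr 1
      funext i
      have r1 := roles1 hspec i
      have hgi := hg i
      rw [Finset.mem_filter] at hgi
      split_ifs with hcond
      · exact ((hgi.mp hcond).2).symm
      · rcases r1 with h0 | h0
        · exact h0.symm
        · exact absurd (hgi.mpr ⟨Finset.mem_univ i, h0⟩) hcond
  rw [himg, Finset.sum_image (fun x _ y _ hxy => vec_inj hxy)]
  apply Finset.sum_congr rfl
  intro ρ _
  exact (mono_eq n ρ).symm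

end Stmt15Aux


/-- if `ke + k > n` (i.e. `e > n/k - 1`), then the orbit sum
`[a_1⋯a_k b_1^e⋯b_k^e]` is decomposable in `L_n`, i.e. it lies in the square of the
augmentation ideal. -/
theorem stmt15 (n k e : ℕ) (hkn : k ≤ n) (h : n < k * e + k) :
    ∃ y : Ln n, y ∈ (augIdealL n) ^ 2 ∧ (y : Kn n) = orbitSum n (headMonomial n k e) := by
  have hk : 1 ≤ k := by
    rcases Nat.eq_zero_or_pos k with rfl | hk
    · simp at h
    · exact hk
  have hchain := Stmt15Aux.chain n k e hk e le_rfl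
  have hWe : Stmt15Aux.OSL n (Finsupp.single (e - e) k) (e * k) = 0 := by
    apply Stmt15Aux.OSL_zero
    have hcomm : k * e = e * k := Nat.mul_comm k e
    omega
  rw [hWe, sub_zero] at hchain
  refine ⟨Stmt15Aux.OSL n (Finsupp.single e k) 0, hchain, ?_⟩
  exact (Stmt15Aux.orbit_eq n k e hkn).symm
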